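/- Paraconsistency and nonmonotonicity of minimally inconsistent entailment in the three-valued logic P: for distinct atoms p and q and Γ = {p, ¬(p∧¬q)}, it holds that (i) Γ ⊭_P q (q is not a P-consequence of Γ), (ii) Γ ⊨ᵐ_P q (q follows from Γ under minimally inconsistent entailment), and (iii) Γ ∪ {¬q} ⊭ᵐ_P q; in particular, ⊨ᵐ_P is nonmonotonic. -/
import Mathlib


/-- Truth values of the three-valued logic P: f < b < t. -/
inductive V3 : Type
  | f | b | t
deriving DecidableEq, Repr

namespace V3

/-- Negation: t, b, f ↦ f, b, t. -/
def negv : V3 → V3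
  | .f => .t
  | .b => .b
  | .t => .f

/-- Conjunction: minimum with respect to f < b < t. -/
def conjv : V3 → V3 → V3
  | .f, _ => .f
  | _, .f => .f
  | .b, _ => .b
  | _, .b => .b
  | .t, .t => .t

/-- Implication: `x ⊃ y` is `y` if `x` is designated (b or t), and `t` otherwise. -/
def impv : V3 → V3 → V3
  | .f, _ => .t
  | _, y => y

end V3

/-- Formulas of the three-valued logic P, with atoms indexed by ℕ, the constant
F, negation, conjunction, and implication. -/
inductive PForm : Type
  | atom : ℕ → PForm
  | fls : PForm
  | neg : PForm → PForm
  | conj : PForm → PForm → PForm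
  | imp : PForm → PForm → PForm
deriving DecidableEq

namespace PForm

/-- The valuation of P extending an interpretation `I : ℕ → V3`. -/
def val (I : ℕ → V3) : PForm → V3
  | atom p => I p
  | fls => .f
  | neg φ => (φ.val I).negv
  | conj φ ψ => (φ.val I).conjv (ψ.val I)
  | imp φ ψ => (φ.val I).impv (ψ.val I)

/-- `I` is a P-model of `φ`: `v_I(φ)` is designated, i.e. b or t. -/
def IsModel (I : ℕ → V3) (φ : PForm) : Prop := φ.val I = .b ∨ φ.val I = .t

/-- `I` is a P-model of the theory `Γ`. -/
def IsModelSet (I : ℕ → V3) (Γ : Set PForm) : Prop := ∀ φ ∈ Γ, IsModel I φ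

end PForm

/-- `Γ ⊨_P Δ`: every P-model of `Γ` is a P-model of some member of `Δ`. -/
def PEntails (Γ Δ : Set PForm) : Prop :=
  ∀ I, PForm.IsModelSet I Γ → ∃ δ ∈ Δ, PForm.IsModel I δ

/-- `I` is a minimally inconsistent P-model of `Γ`. -/
def PMinIncModel (I : ℕ → V3) (Γ : Set PForm) : Prop :=
  PForm.IsModelSet I Γ ∧
    ¬ ∃ J : ℕ → V3, PForm.IsModelSet J Γ ∧ {p : ℕ | J p = .b} ⊂ {p : ℕ | I p = .b}

/-- `Γ ⊨ᵐ_P Δ`: every minimally inconsistent P-model of `Γ` is a P-model of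
some member of `Δ`. -/
def PMinEntails (Γ Δ : Set PForm) : Prop :=
  ∀ I, PMinIncModel I Γ → ∃ δ ∈ Δ, PForm.IsModel I δ

/-- Paraconsistency and nonmonotonicity of minimally inconsistent entailment
in the three-valued logic P: for distinct atoms `p`, `q` and
`Γ = {p, ¬(p ∧ ¬q)}`, (i) `Γ ⊭_P q`, (ii) `Γ ⊨ᵐ_P q`, and
(iii) `Γ ∪ {¬q} ⊭ᵐ_P q`. -/
theorem P_paraconsistent_nonmonotonic (p q : ℕ) (hpq : p ≠ q) :
    ¬ PEntails {PForm.atom p, PForm.neg (PForm.conj (PForm.atom p) (PForm.neg (PForm.atom q)))}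
        {PForm.atom q} ∧
    PMinEntails {PForm.atom p, PForm.neg (PForm.conj (PForm.atom p) (PForm.neg (PForm.atom q)))}
        {PForm.atom q} ∧
    ¬ PMinEntails ({PForm.atom p, PForm.neg (PForm.conj (PForm.atom p) (PForm.neg (PForm.atom q)))}
          ∪ {PForm.neg (PForm.atom q)})
        {PForm.atom q} := by
  have hqp : q ≠ p := Ne.symm hpq
  refine ⟨?_, ?_, ?_⟩
  · -- (i)
    intro h
    have hmod : PForm.IsModelSet (fun x => if x = p then .b else .f)
        {PForm.atom p, PForm.neg (PForm.conj (PForm.atom p) (PForm.neg (PForm.atom q)))} := by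
      intro φ hφ
      rcases hφ with rfl | rfl <;>
        simp [PForm.IsModel, PForm.val, V3.negv, V3.conjv, hqp]
    obtain ⟨δ, hδ, hm⟩ := h _ hmod
    rw [Set.mem_singleton_iff] at hδ
    subst hδ
    simp [PForm.IsModel, PForm.val, hqp] at hm
  · -- (ii)
    rintro I ⟨hmod, hmin⟩
    refine ⟨PForm.atom q, Set.mem_singleton _, ?_⟩
    by_contra hq
    have hq' : I q = .f := by
      rcases hIq : I q with _ | _ | _
      · rfl
      · exact absurd (Or.inl (show PForm.val I (PForm.atom q) = .b from hIq)) hq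
      · exact absurd (Or.inr (show PForm.val I (PForm.atom q) = .t from hIq)) hq
    have hp1 : PForm.IsModel I (PForm.atom p) := hmod _ (Set.mem_insert _ _)
    have hp2 : PForm.IsModel I (PForm.neg (PForm.conj (PForm.atom p) (PForm.neg (PForm.atom q)))) :=
      hmod _ (Set.mem_insert_of_mem _ rfl)
    have hpb : I p = .b := by
      rcases hIp : I p with _ | _ | _
      · simp [PForm.IsModel, PForm.val, hIp] at hp1
      · rfl
      · simp [PForm.IsModel, PForm.val, hIp, hq', V3.negv, V3.conjv] at hp2
    apply hmin
    refine ⟨fun x => if x = p then .t else if x = q then .t else I x, ?_, ?_⟩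
    · intro φ hφ
      rcases hφ with rfl | rfl <;>
        simp [PForm.IsModel, PForm.val, V3.negv, V3.conjv, hqp]
    · constructor
      · intro x hx
        simp only [Set.mem_setOf_eq] at hx ⊢
        by_cases h1 : x = p
        · simp [h1] at hx
        · by_cases h2 : x = q
          · simp [h1, h2] at hx
          · simpa [h1, h2] using hx
      · intro hsub
        have := hsub (show p ∈ {x | I x = .b} from hpb)
        simp at this
  · -- (iii)
    intro h
    have hmod : PForm.IsModelSet (fun x => if x = p then .b else .f)
        ({PForm.atom p, PForm.neg (PForm.conj (PForm.atom p) (PForm.neg (PForm.atom q)))}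
          ∪ {PForm.neg (PForm.atom q)}) := by
      intro φ hφ
      rcases hφ with (rfl | rfl) | rfl <;>
        simp [PForm.IsModel, PForm.val, V3.negv, V3.conjv, hqp]
    have hmin : PMinIncModel (fun x => if x = p then .b else .f)
        ({PForm.atom p, PForm.neg (PForm.conj (PForm.atom p) (PForm.neg (PForm.atom q)))}
          ∪ {PForm.neg (PForm.atom q)}) := by
      refine ⟨hmod, ?_⟩
      rintro ⟨J, hJmod, hJsub, hJne⟩
      have hBJ : ∀ y, J y ≠ .b := by
        intro y hy
        have hyp : y = p := by
          have := hJsub hy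
          simp only [Set.mem_setOf_eq] at this
          by_contra hc
          simp [hc] at this
        apply hJne
        intro x hx
        simp only [Set.mem_setOf_eq] at hx ⊢
        have hxp : x = p := by
          by_contra hc
          simp [hc] at hx
        rw [hxp, ← hyp]; exact hy
      have hJp : J p = .t := by
        have := hJmod _ (Set.mem_union_left _ (Set.mem_insert _ _))
        rcases hJP : J p with _ | _ | _
        · simp [PForm.IsModel, PForm.val, hJP] at this
        · exact absurd hJP (hBJ p)
        · rfl
      have hJq : J q = .f := by
        have := hJmod _ (Set.mem_union_right _ rfl)
        rcases hJQ : J q with _ | _ | _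
        · rfl
        · exact absurd hJQ (hBJ q)
        · simp [PForm.IsModel, PForm.val, hJQ, V3.negv] at this
      have := hJmod _ (Set.mem_union_left _ (Set.mem_insert_of_mem _ rfl))
      simp [PForm.IsModel, PForm.val, hJp, hJq, V3.negv, V3.conjv] at this
    obtain ⟨δ, hδ, hm⟩ := h _ hmin
    rw [Set.mem_singleton_iff] at hδ
    subst hδ
    simp [PForm.IsModel, PForm.val, hqp] at hm
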